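/- Let A = KΔ/I be a bound quiver algebra and α a 2-cocycle vanishing on trivial paths. Then for all vertices i,j, the number of arrows from i to j in the ordinary quiver of A is at most the number of arrows from i to j in the ordinary quiver of T_α(A), which is at most the number of arrows from i to j in the ordinary quiver of the trivial extension T_0(A) = A ⋉ D(A). Hence Δ ⊆ Δ_{T_α(A)} ⊆ Δ_{T_0(A)} as quivers on the same vertex set. -/

import Mathlib

open Module

variable {K A : Type*}

/-- Left action of `A` on `D(A) = Hom_K(A,K)`: `(a • f) c = f (c * a)`. -/
noncomputable def lact [Field K] [Ring A] [Algebra K A]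
    (a : A) (f : Module.Dual K A) : Module.Dual K A :=
  f ∘ₗ LinearMap.mulRight K a

/-- Right action of `A` on `D(A)`: `(f • b) c = f (b * c)`. -/
noncomputable def ract [Field K] [Ring A] [Algebra K A]
    (f : Module.Dual K A) (b : A) : Module.Dual K A :=
  f ∘ₗ LinearMap.mulLeft K b

/-- `α : A × A → D(A)` is a Hochschild 2-cocycle: it is `K`-bilinear and satisfies
`a·α(b,c) − α(ab,c) + α(a,bc) − α(a,b)·c = 0`. -/
def IsHochschild2Cocycle [Field K] [Ring A] [Algebra K A]
    (α : A → A → Module.Dual K A) : Prop :=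
  (∀ a b c : A, α (a + b) c = α a c + α b c) ∧
  (∀ a b c : A, α a (b + c) = α a b + α a c) ∧
  (∀ (k : K) (a b : A), α (k • a) b = k • α a b) ∧
  (∀ (k : K) (a b : A), α a (k • b) = k • α a b) ∧
  (∀ a b c : A, lact a (α b c) - α (a * b) c + α a (b * c) - ract (α a b) c = 0)

/-- The multiplication `(a,x)(b,y) = (ab, a·y + x·b + α(a,b))` on `A ⊕ D(A)`. -/
noncomputable def extMul [Field K] [Ring A] [Algebra K A]
    (α : A → A → Module.Dual K A) (p q : A × Module.Dual K A) :
    A × Module.Dual K A :=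
  (p.1 * q.1, lact p.1 q.2 + ract p.2 q.1 + α p.1 q.1)

/-- The element `(1_A, −α(1,1))` of `T_α(A)`. -/
noncomputable def extOne [Field K] [Ring A] [Algebra K A]
    (α : A → A → Module.Dual K A) : A × Module.Dual K A :=
  ((1 : A), -α 1 1)

section Jacobson

variable {B : Type*}

/-- `S` is a left ideal of `B` with respect to the multiplication `mul`. -/
def IsLeftIdealSet [AddCommGroup B] (mul : B → B → B) (S : Set B) : Prop :=
  (0 : B) ∈ S ∧ (∀ x ∈ S, ∀ y ∈ S, x + y ∈ S) ∧ (∀ x ∈ S, -x ∈ S) ∧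
    ∀ b : B, ∀ x ∈ S, mul b x ∈ S

/-- `S` is a maximal (proper) left ideal of `B`. -/
def IsMaxLeftIdealSet [AddCommGroup B] (mul : B → B → B) (S : Set B) : Prop :=
  IsLeftIdealSet mul S ∧ S ≠ Set.univ ∧
    ∀ S', IsLeftIdealSet mul S' → S ⊆ S' → S' ≠ Set.univ → S' = S

/-- The Jacobson radical of `B`: the intersection of all maximal left ideals. -/
def jacSet [AddCommGroup B] (mul : B → B → B) : Set B :=
  ⋂₀ {S | IsMaxLeftIdealSet mul S}

/-- The square of the Jacobson radical: the additive span of products of two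
elements of the radical. -/
def jacSqSet [AddCommGroup B] (mul : B → B → B) : Set B :=
  (AddSubgroup.closure
    {z | ∃ x ∈ jacSet mul, ∃ y ∈ jacSet mul, z = mul x y} : Set B)

variable (K : Type*) [Field K]

/-- The subspace `f·J(B)·g` of `B`. -/
noncomputable def cornerJ [AddCommGroup B] [Module K B] (mul : B → B → B) (f g : B) :
    Submodule K B :=
  Submodule.span K {y | ∃ x ∈ jacSet mul, y = mul (mul f x) g}

/-- The subspace `f·J(B)²·g` of `B`. -/
noncomputable def cornerJSq [AddCommGroup B] [Module K B] (mul : B → B → B) (f g : B) :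
    Submodule K B :=
  Submodule.span K {y | ∃ x ∈ jacSqSet mul, y = mul (mul f x) g}

/-- The number of arrows `i → j` of the ordinary quiver of a basic algebra `B`
with primitive idempotents `f = f_i`, `g = f_j`:
`dim_K f (J(B)/J(B)²) g = dim_K (f·J(B)·g / f·J(B)²·g)`. -/
noncomputable def numArrows [AddCommGroup B] [Module K B] (mul : B → B → B) (f g : B) : ℕ :=
  Module.finrank K
    ((cornerJ K mul f g) ⧸
      Submodule.comap (cornerJ K mul f g).subtype (cornerJSq K mul f g))

/-- An idempotent is primitive if it is nonzero and admits no decomposition into two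
nonzero orthogonal idempotents. -/
def IsPrimitiveIdem [AddCommGroup B] (mul : B → B → B) (a : B) : Prop :=
  mul a a = a ∧ a ≠ 0 ∧
    ∀ b c : B, mul b b = b → mul c c = c → mul b c = 0 → mul c b = 0 →
      b + c = a → b = 0 ∨ c = 0

end Jacobson

section Subspaces

variable {K A : Type*} [Field K] [Ring A] [Algebra K A]

/-- The subspace `J(A)·D(A)` of `D(A)`. -/
noncomputable def jacD (A : Type*) [Ring A] (K : Type*) [Field K] [Algebra K A] :
    Submodule K (Module.Dual K A) :=
  Submodule.span K
    {g | ∃ a ∈ jacSet (fun x y : A => x * y), ∃ f : Module.Dual K A, g = lact a f}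

/-- The subspace `D(A)·J(A)` of `D(A)`. -/
noncomputable def dJac (A : Type*) [Ring A] (K : Type*) [Field K] [Algebra K A] :
    Submodule K (Module.Dual K A) :=
  Submodule.span K
    {g | ∃ b ∈ jacSet (fun x y : A => x * y), ∃ f : Module.Dual K A, g = ract f b}

/-- The subspace `α(J(A), J(A))` of `D(A)`. -/
noncomputable def alphaJJ (α : A → A → Module.Dual K A) :
    Submodule K (Module.Dual K A) :=
  Submodule.span K
    {g | ∃ a ∈ jacSet (fun x y : A => x * y), ∃ b ∈ jacSet (fun x y : A => x * y),
      g = α a b}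

end Subspaces

section AuxCalc

variable {K A : Type*} [Field K] [Ring A] [Algebra K A]

@[simp] lemma lact_apply (a : A) (f : Module.Dual K A) (c : A) : lact a f c = f (c * a) := rfl

@[simp] lemma ract_apply (f : Module.Dual K A) (b c : A) : ract f b c = f (b * c) := rfl

lemma lact_addl (a b : A) (f : Module.Dual K A) : lact (a + b) f = lact a f + lact b f := by
  ext c; simp [mul_add]

lemma lact_addr (a : A) (f g : Module.Dual K A) : lact a (f + g) = lact a f + lact a g := by
  ext c; simp

lemma lact_zl (f : Module.Dual K A) : lact (0 : A) f = 0 := by ext c; simp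

lemma lact_zr (a : A) : lact a (0 : Module.Dual K A) = 0 := by ext c; simp

lemma lact_smul (k : K) (a : A) (f : Module.Dual K A) : lact a (k • f) = k • lact a f := by
  ext c; simp

lemma ract_addl (f g : Module.Dual K A) (b : A) : ract (f + g) b = ract f b + ract g b := by
  ext c; simp

lemma ract_addr (f : Module.Dual K A) (a b : A) : ract f (a + b) = ract f a + ract f b := by
  ext c; simp [add_mul]

lemma ract_zl (b : A) : ract (0 : Module.Dual K A) b = 0 := by ext c; simp

lemma ract_zr (f : Module.Dual K A) : ract f (0 : A) = 0 := by ext c; simp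

lemma ract_smul (k : K) (f : Module.Dual K A) (b : A) : ract (k • f) b = k • ract f b := by
  ext c; simp

lemma ract_one (f : Module.Dual K A) : ract f (1 : A) = f := by ext c; simp

end AuxCalc

section AuxCocycle

variable {K A : Type*} [Field K] [Ring A] [Algebra K A]
variable {β : A → A → Module.Dual K A}

lemma beta_zero_right (h2 : ∀ a b c : A, β a (b + c) = β a b + β a c) (a : A) :
    β a 0 = 0 := by
  have h := h2 a 0 0
  rw [add_zero] at h
  exact add_left_cancel (a := β a 0) (by rw [← h, add_zero])

lemma beta_zero_left (h1 : ∀ a b c : A, β (a + b) c = β a c + β b c) (b : A) :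
    β 0 b = 0 := by
  have h := h1 0 0 b
  rw [add_zero] at h
  exact add_left_cancel (a := β 0 b) (by rw [← h, add_zero])

lemma extMul_addr (h2 : ∀ a b c : A, β a (b + c) = β a b + β a c)
    (p q r : A × Module.Dual K A) :
    extMul β p (q + r) = extMul β p q + extMul β p r := by
  have hfst : (q + r).1 = q.1 + r.1 := rfl
  have hsnd : (q + r).2 = q.2 + r.2 := rfl
  unfold extMul
  rw [hfst, hsnd, mul_add, lact_addr, ract_addr, h2, Prod.mk_add_mk, Prod.mk.injEq]
  exact ⟨rfl, by abel⟩

end AuxCocycle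

section IdealSets

variable {B : Type*} [AddCommGroup B]

lemma isLeftIdealSet_sInter (m : B → B → B) (C : Set (Set B))
    (hC : ∀ S ∈ C, IsLeftIdealSet m S) : IsLeftIdealSet m (⋂₀ C) := by
  refine ⟨fun S hS => (hC S hS).1, fun x hx y hy S hS => (hC S hS).2.1 x (hx S hS) y (hy S hS),
    fun x hx S hS => (hC S hS).2.2.1 x (hx S hS),
    fun b x hx S hS => (hC S hS).2.2.2 b x (hx S hS)⟩

lemma jacSet_isLeftIdeal (m : B → B → B) : IsLeftIdealSet m (jacSet m) :=
  isLeftIdealSet_sInter m _ (fun _ hS => hS.1)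

end IdealSets

section Correspondence

variable {K A : Type*} [Field K] [Ring A] [Algebra K A]
variable {β : A → A → Module.Dual K A}

/-- If a left ideal of `T_β` contains `(1, g)`, it is everything. -/
lemma ext_eq_univ_of_one_mem (hone : ∀ b : A, β b 1 = 0)
    {M : Set (A × Module.Dual K A)} (hM : IsLeftIdealSet (extMul β) M)
    {g : Module.Dual K A} (hg : ((1 : A), g) ∈ M) : M = Set.univ := by
  ext ⟨b, f⟩
  simp only [Set.mem_univ, iff_true]
  have key : extMul β (b, f - lact b g) ((1 : A), g) = (b, f) := by
    unfold extMul
    rw [Prod.mk.injEq]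
    refine ⟨mul_one b, ?_⟩
    rw [hone, add_zero, ract_one]
    simp
  have := hM.2.2.2 (b, f - lact b g) _ hg
  rwa [key] at this

/-- If a left ideal of `A` contains `1`, it is everything. -/
lemma base_eq_univ_of_one_mem
    {P : Set A} (hP : IsLeftIdealSet (fun x y : A => x * y) P) (h1 : (1 : A) ∈ P) :
    P = Set.univ := by
  ext b
  simp only [Set.mem_univ, iff_true]
  simpa using hP.2.2.2 b 1 h1

/-- Every maximal left ideal of `T_β` contains `0 ⊕ D(A)`. -/
lemma D_subset_of_max
    (h1 : ∀ a b c : A, β (a + b) c = β a c + β b c)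
    (h2 : ∀ a b c : A, β a (b + c) = β a b + β a c)
    (hone : ∀ b : A, β b 1 = 0)
    {M : Set (A × Module.Dual K A)} (hM : IsMaxLeftIdealSet (extMul β) M) :
    ∀ g : Module.Dual K A, ((0 : A), g) ∈ M := by
  intro g
  by_contra hg
  set M' : Set (A × Module.Dual K A) :=
    {z | ∃ m ∈ M, ∃ h : Module.Dual K A, z = m + (0, h)} with hM'def
  have hM'ideal : IsLeftIdealSet (extMul β) M' := by
    refine ⟨⟨0, hM.1.1, 0, by simp; rfl⟩, ?_, ?_, ?_⟩
    · rintro x ⟨m, hm, hx, rfl⟩ y ⟨n, hn, hy, rfl⟩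
      refine ⟨m + n, hM.1.2.1 m hm n hn, hx + hy, ?_⟩
      rw [Prod.ext_iff]
      refine ⟨by simp, ?_⟩
      simp only [Prod.snd_add]
      abel
    · rintro x ⟨m, hm, hx, rfl⟩
      refine ⟨-m, hM.1.2.2.1 m hm, -hx, ?_⟩
      rw [Prod.ext_iff]
      refine ⟨by simp, ?_⟩
      show -(m.2 + hx) = -m.2 + -hx
      abel
    · rintro b x ⟨m, hm, hx, rfl⟩
      refine ⟨extMul β b m, hM.1.2.2.2 b m hm, lact b.1 hx, ?_⟩
      rw [extMul_addr h2]
      congr 1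
      simp only [extMul, mul_zero, ract_zr, beta_zero_right h2, add_zero, zero_add]
  have hMM' : M ⊆ M' := fun m hm => ⟨m, hm, 0, by simp⟩
  have hne : M' ≠ M := by
    intro hEq
    exact hg (hEq ▸ (⟨0, hM.1.1, g, by simp⟩ : ((0 : A), g) ∈ M'))
  have huniv : M' = Set.univ := by
    by_contra hh
    exact hne (hM.2.2 M' hM'ideal hMM' hh)
  have h1m : ((1 : A), (0 : Module.Dual K A)) ∈ M' := huniv ▸ Set.mem_univ _
  obtain ⟨⟨m1, m2⟩, hm, hh, heq⟩ := h1m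
  have hm1 : m1 = 1 := by
    have := congrArg Prod.fst heq
    simpa using this.symm
  subst hm1
  exact hM.2.1 (ext_eq_univ_of_one_mem hone hM.1 hm)

/-- A left ideal of `T_β` containing `0 ⊕ D` is a product. -/
lemma leftIdeal_with_D
    {M : Set (A × Module.Dual K A)} (hM : IsLeftIdealSet (extMul β) M)
    (hD : ∀ g : Module.Dual K A, ((0 : A), g) ∈ M) :
    M = (Prod.fst '' M) ×ˢ (Set.univ : Set (Module.Dual K A)) ∧
      IsLeftIdealSet (fun x y : A => x * y) (Prod.fst '' M) := by
  constructor
  · ext ⟨a, f⟩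
    simp only [Set.mem_prod, Set.mem_image, Set.mem_univ, and_true, Prod.exists]
    constructor
    · intro hmem; exact ⟨a, f, hmem, rfl⟩
    · rintro ⟨a', f', hm, rfl⟩
      have := hM.2.1 _ hm _ (hD (f - f'))
      simpa using this
  · refine ⟨⟨(0, 0), hM.1, rfl⟩, ?_, ?_, ?_⟩
    · rintro x ⟨⟨x1, x2⟩, hx, rfl⟩ y ⟨⟨y1, y2⟩, hy, rfl⟩
      exact ⟨(x1, x2) + (y1, y2), hM.2.1 _ hx _ hy, rfl⟩
    · rintro x ⟨⟨x1, x2⟩, hx, rfl⟩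
      exact ⟨-(x1, x2), hM.2.2.1 _ hx, rfl⟩
    · rintro b x ⟨⟨x1, x2⟩, hx, rfl⟩
      exact ⟨extMul β (b, 0) (x1, x2), hM.2.2.2 (b, 0) _ hx, rfl⟩

/-- Products of left ideals with `D` are left ideals of `T_β`. -/
lemma prod_leftIdeal {P : Set A} (hP : IsLeftIdealSet (fun x y : A => x * y) P) :
    IsLeftIdealSet (extMul β) (P ×ˢ (Set.univ : Set (Module.Dual K A))) := by
  refine ⟨⟨hP.1, trivial⟩, ?_, ?_, ?_⟩
  · rintro ⟨x1, x2⟩ ⟨hx, -⟩ ⟨y1, y2⟩ ⟨hy, -⟩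
    exact ⟨hP.2.1 x1 hx y1 hy, trivial⟩
  · rintro ⟨x1, x2⟩ ⟨hx, -⟩
    exact ⟨hP.2.2.1 x1 hx, trivial⟩
  · rintro ⟨b1, b2⟩ ⟨x1, x2⟩ ⟨hx, -⟩
    exact ⟨hP.2.2.2 b1 x1 hx, trivial⟩

lemma max_of_prod (hone : ∀ b : A, β b 1 = 0)
    {P : Set A} (hP : IsMaxLeftIdealSet (fun x y : A => x * y) P) :
    IsMaxLeftIdealSet (extMul β) (P ×ˢ (Set.univ : Set (Module.Dual K A))) := by
  refine ⟨prod_leftIdeal hP.1, ?_, ?_⟩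
  · intro hcon
    apply hP.2.1
    apply base_eq_univ_of_one_mem hP.1
    have : ((1 : A), (0 : Module.Dual K A)) ∈ P ×ˢ (Set.univ : Set (Module.Dual K A)) :=
      hcon ▸ Set.mem_univ _
    exact this.1
  · intro S' hS' hsub hne
    have hD : ∀ g : Module.Dual K A, ((0 : A), g) ∈ S' := fun g => hsub ⟨hP.1.1, trivial⟩
    obtain ⟨hSeq, hQ⟩ := leftIdeal_with_D hS' hD
    have hQne : Prod.fst '' S' ≠ Set.univ := by
      intro hcon
      apply hne
      have h1 : (1 : A) ∈ Prod.fst '' S' := hcon ▸ Set.mem_univ _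
      obtain ⟨⟨a, f⟩, hm, ha⟩ := h1
      simp only at ha
      subst ha
      exact ext_eq_univ_of_one_mem hone hS' hm
    have hPQ : P ⊆ Prod.fst '' S' := fun a ha => ⟨(a, 0), hsub ⟨ha, trivial⟩, rfl⟩
    have := hP.2.2 _ hQ hPQ hQne
    rw [hSeq, this]

/-- Every maximal left ideal of `T_β` is a product of a maximal left ideal with `D`. -/
lemma max_of_ext
    (h1 : ∀ a b c : A, β (a + b) c = β a c + β b c)
    (h2 : ∀ a b c : A, β a (b + c) = β a b + β a c)
    (hone : ∀ b : A, β b 1 = 0)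
    {M : Set (A × Module.Dual K A)} (hM : IsMaxLeftIdealSet (extMul β) M) :
    M = (Prod.fst '' M) ×ˢ (Set.univ : Set (Module.Dual K A)) ∧
      IsMaxLeftIdealSet (fun x y : A => x * y) (Prod.fst '' M) := by
  have hD := D_subset_of_max h1 h2 hone hM
  obtain ⟨hMeq, hPideal⟩ := leftIdeal_with_D hM.1 hD
  refine ⟨hMeq, hPideal, ?_, ?_⟩
  · intro hcon
    apply hM.2.1
    have h1m : (1 : A) ∈ Prod.fst '' M := hcon ▸ Set.mem_univ _
    obtain ⟨⟨a, f⟩, hm, ha⟩ := h1m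
    simp only at ha
    subst ha
    exact ext_eq_univ_of_one_mem hone hM.1 hm
  · intro Q hQ hPQ hQne
    have hQuniv : Q ×ˢ (Set.univ : Set (Module.Dual K A)) ≠ Set.univ := by
      intro hcon
      apply hQne
      apply base_eq_univ_of_one_mem hQ
      have : ((1 : A), (0 : Module.Dual K A)) ∈ Q ×ˢ (Set.univ : Set (Module.Dual K A)) :=
        hcon ▸ Set.mem_univ _
      exact this.1
    have hMQ : M ⊆ Q ×ˢ (Set.univ : Set (Module.Dual K A)) := by
      rw [hMeq]
      exact Set.prod_mono hPQ le_rfl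
    have := hM.2.2 _ (prod_leftIdeal hQ) hMQ hQuniv
    ext a
    constructor
    · intro ha
      have : ((a : A), (0 : Module.Dual K A)) ∈ M := this ▸ ⟨ha, trivial⟩
      rw [hMeq] at this
      exact this.1
    · exact fun ha => hPQ ha

/-- The Jacobson radical of `T_β` is `J(A) × D(A)`. -/
lemma jacSet_extMul
    (h1 : ∀ a b c : A, β (a + b) c = β a c + β b c)
    (h2 : ∀ a b c : A, β a (b + c) = β a b + β a c)
    (hone : ∀ b : A, β b 1 = 0) :
    jacSet (extMul β) =
      (jacSet (fun x y : A => x * y)) ×ˢ (Set.univ : Set (Module.Dual K A)) := by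
  ext ⟨a, f⟩
  simp only [jacSet, Set.mem_sInter, Set.mem_setOf_eq, Set.mem_prod, Set.mem_univ, and_true]
  constructor
  · intro hmem P hP
    exact (hmem _ (max_of_prod hone hP)).1
  · intro ha M hM
    obtain ⟨hMeq, hmax⟩ := max_of_ext h1 h2 hone hM
    rw [hMeq]
    exact ⟨ha _ hmax, trivial⟩

end Correspondence
section Submodules

variable (K A : Type*) [Field K] [Ring A] [Algebra K A]

noncomputable def JAsub : Submodule K A where
  carrier := jacSet (fun x y : A => x * y)
  add_mem' := fun {x y} hx hy => (jacSet_isLeftIdeal _).2.1 x hx y hy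
  zero_mem' := (jacSet_isLeftIdeal _).1
  smul_mem' := fun k x hx => by
    have := (jacSet_isLeftIdeal (fun x y : A => x * y)).2.2.2 (algebraMap K A k) x hx
    simpa [Algebra.smul_def] using this

noncomputable def WAsub : Submodule K A :=
  Submodule.span K {z : A | ∃ x ∈ jacSet (fun x y : A => x * y),
    ∃ y ∈ jacSet (fun x y : A => x * y), z = x * y}

noncomputable def NDsub : Submodule K (Module.Dual K A) :=
  Submodule.span K
    ({d | ∃ a ∈ jacSet (fun x y : A => x * y), ∃ g : Module.Dual K A, d = lact a g} ∪
     {d | ∃ b ∈ jacSet (fun x y : A => x * y), ∃ f : Module.Dual K A, d = ract f b})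

variable {K A}

noncomputable def Wext (β : A → A → Module.Dual K A) : Submodule K (A × Module.Dual K A) :=
  Submodule.span K {z | ∃ x ∈ jacSet (extMul β), ∃ y ∈ jacSet (extMul β), z = extMul β x y}

noncomputable def phiC (u v : A) : A →ₗ[K] A :=
  (LinearMap.mulRight K v) ∘ₗ (LinearMap.mulLeft K u)

lemma phiC_apply (u v x : A) : phiC (K := K) u v x = u * x * v := rfl

noncomputable def Lm (u v : A) : Module.Dual K A →ₗ[K] Module.Dual K A where
  toFun f := ract (lact u f) v
  map_add' f g := by rw [lact_addr, ract_addl]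
  map_smul' k f := by simp only [RingHom.id_apply]; rw [lact_smul, ract_smul]

lemma Lm_apply (u v : A) (f : Module.Dual K A) : Lm (K := K) u v f = ract (lact u f) v := rfl

noncomputable def PhiT (u v : A) : (A × Module.Dual K A) →ₗ[K] (A × Module.Dual K A) :=
  (phiC (K := K) u v).prodMap (Lm u v)

lemma PhiT_apply (u v : A) (z : A × Module.Dual K A) :
    PhiT (K := K) u v z = (u * z.1 * v, ract (lact u z.2) v) := rfl

lemma extMul_corner {β : A → A → Module.Dual K A} {u v : A}
    (hu : ∀ a : A, β u a = 0) (hv : ∀ a : A, β a v = 0) (z : A × Module.Dual K A) :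
    extMul β (extMul β ((u : A), (0 : Module.Dual K A)) z) (v, 0) = PhiT u v z := by
  obtain ⟨a, f⟩ := z
  rw [PhiT_apply]
  unfold extMul
  simp only [hu, hv, ract_zl, lact_zr, add_zero, zero_add]

lemma span_coe_closure {K B : Type*} [Field K] [AddCommGroup B] [Module K B] (G : Set B) :
    Submodule.span K ((AddSubgroup.closure G : AddSubgroup B) : Set B) = Submodule.span K G := by
  refine le_antisymm ?_ (Submodule.span_mono AddSubgroup.subset_closure)
  rw [Submodule.span_le]
  intro x hx
  exact (AddSubgroup.closure_le ((Submodule.span K G).toAddSubgroup)).mpr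
    (fun y hy => Submodule.subset_span hy) hx

lemma cornerJ_eq_map {K B : Type*} [Field K] [AddCommGroup B] [Module K B]
    (m : B → B → B) (f g : B) (φ : B →ₗ[K] B) (hφ : ∀ x, m (m f x) g = φ x) :
    cornerJ K m f g = Submodule.map φ (Submodule.span K (jacSet m)) := by
  rw [Submodule.map_span]
  unfold cornerJ
  congr 1
  ext y
  simp only [Set.mem_setOf_eq, Set.mem_image]
  constructor
  · rintro ⟨x, hx, rfl⟩; exact ⟨x, hx, (hφ x).symm⟩
  · rintro ⟨x, hx, rfl⟩; exact ⟨x, hx, (hφ x).symm⟩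

lemma cornerJSq_eq_map {K B : Type*} [Field K] [AddCommGroup B] [Module K B]
    (m : B → B → B) (f g : B) (φ : B →ₗ[K] B) (hφ : ∀ x, m (m f x) g = φ x) :
    cornerJSq K m f g = Submodule.map φ
      (Submodule.span K {z | ∃ x ∈ jacSet m, ∃ y ∈ jacSet m, z = m x y}) := by
  have h1 : {y | ∃ x ∈ jacSqSet m, y = m (m f x) g} = φ '' (jacSqSet m) := by
    ext y
    constructor
    · rintro ⟨x, hx, rfl⟩; exact ⟨x, hx, (hφ x).symm⟩
    · rintro ⟨x, hx, rfl⟩; exact ⟨x, hx, (hφ x).symm⟩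
  rw [cornerJSq, h1, ← Submodule.map_span, jacSqSet, span_coe_closure]

end Submodules
section Structure

variable {K A : Type*} [Field K] [Ring A] [Algebra K A]
variable {β : A → A → Module.Dual K A}

lemma mem_jacSet_ext
    (h1 : ∀ a b c : A, β (a + b) c = β a c + β b c)
    (h2 : ∀ a b c : A, β a (b + c) = β a b + β a c)
    (hone : ∀ b : A, β b 1 = 0)
    (z : A × Module.Dual K A) :
    z ∈ jacSet (extMul β) ↔ z.1 ∈ jacSet (fun x y : A => x * y) := by
  rw [jacSet_extMul h1 h2 hone]
  exact ⟨fun h => h.1, fun h => ⟨h, trivial⟩⟩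

lemma span_jacSet_A : Submodule.span K (jacSet (fun x y : A => x * y)) = JAsub K A :=
  Submodule.span_eq (JAsub K A)

lemma span_jacSet_ext
    (h1 : ∀ a b c : A, β (a + b) c = β a c + β b c)
    (h2 : ∀ a b c : A, β a (b + c) = β a b + β a c)
    (hone : ∀ b : A, β b 1 = 0) :
    Submodule.span K (jacSet (extMul β)) =
      (JAsub K A).prod (⊤ : Submodule K (Module.Dual K A)) := by
  rw [jacSet_extMul h1 h2 hone]
  have hset : (jacSet (fun x y : A => x * y)) ×ˢ (Set.univ : Set (Module.Dual K A)) =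
      ((JAsub K A).prod (⊤ : Submodule K (Module.Dual K A)) : Set (A × Module.Dual K A)) := by
    ext ⟨a, f⟩
    simp only [Set.mem_prod, Set.mem_univ, and_true, SetLike.mem_coe, Submodule.mem_prod,
      Submodule.mem_top]
    rfl
  rw [hset, Submodule.span_eq]

-- (S4)
lemma Wext_le_prod
    (h1 : ∀ a b c : A, β (a + b) c = β a c + β b c)
    (h2 : ∀ a b c : A, β a (b + c) = β a b + β a c)
    (hone : ∀ b : A, β b 1 = 0) :
    Wext β ≤ (JAsub K A).prod (⊤ : Submodule K (Module.Dual K A)) := by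
  rw [Wext, Submodule.span_le]
  rintro z ⟨x, hx, y, hy, rfl⟩
  rw [mem_jacSet_ext h1 h2 hone] at hy
  refine Submodule.mem_prod.mpr ⟨?_, trivial⟩
  exact (jacSet_isLeftIdeal (fun x y : A => x * y)).2.2.2 x.1 y.1 hy

lemma WAsub_le_JAsub : WAsub K A ≤ JAsub K A := by
  rw [WAsub, Submodule.span_le]
  rintro z ⟨x, hx, y, hy, rfl⟩
  exact (jacSet_isLeftIdeal (fun x y : A => x * y)).2.2.2 x y hy

-- (S2)
lemma map_fst_Wext
    (h1 : ∀ a b c : A, β (a + b) c = β a c + β b c)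
    (h2 : ∀ a b c : A, β a (b + c) = β a b + β a c)
    (hone : ∀ b : A, β b 1 = 0) :
    Submodule.map (LinearMap.fst K A (Module.Dual K A)) (Wext β) = WAsub K A := by
  rw [Wext, WAsub, Submodule.map_span]
  congr 1
  ext w
  simp only [Set.mem_image, Set.mem_setOf_eq]
  constructor
  · rintro ⟨z, ⟨x, hx, y, hy, rfl⟩, rfl⟩
    exact ⟨x.1, (mem_jacSet_ext h1 h2 hone x).mp hx,
      y.1, (mem_jacSet_ext h1 h2 hone y).mp hy, rfl⟩
  · rintro ⟨a, ha, b, hb, rfl⟩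
    exact ⟨extMul β (a, 0) (b, 0),
      ⟨(a, 0), (mem_jacSet_ext h1 h2 hone _).mpr ha,
       (b, 0), (mem_jacSet_ext h1 h2 hone _).mpr hb, rfl⟩, rfl⟩

-- (S3)
lemma inr_NDsub_le_Wext
    (h1 : ∀ a b c : A, β (a + b) c = β a c + β b c)
    (h2 : ∀ a b c : A, β a (b + c) = β a b + β a c)
    (hone : ∀ b : A, β b 1 = 0) :
    ∀ n ∈ NDsub K A, ((0 : A), n) ∈ Wext β := by
  have hle : NDsub K A ≤
      Submodule.comap (LinearMap.inr K A (Module.Dual K A)) (Wext β) := by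
    rw [NDsub, Submodule.span_le]
    rintro d (⟨a, ha, g, rfl⟩ | ⟨b, hb, f, rfl⟩)
    · have hz : ((0 : A), lact a g) = extMul β (a, 0) (0, g) := by
        unfold extMul
        rw [Prod.mk.injEq]
        refine ⟨(mul_zero a).symm, ?_⟩
        rw [ract_zl, beta_zero_right h2, add_zero, add_zero]
      refine Submodule.mem_comap.mpr ?_
      show ((0 : A), lact a g) ∈ Wext β
      rw [hz]
      exact Submodule.subset_span ⟨(a, 0), (mem_jacSet_ext h1 h2 hone _).mpr ha,
        (0, g), (mem_jacSet_ext h1 h2 hone _).mpr (jacSet_isLeftIdeal _).1, rfl⟩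
    · have hz : ((0 : A), ract f b) = extMul β (0, f) (b, 0) := by
        unfold extMul
        rw [Prod.mk.injEq]
        refine ⟨(zero_mul b).symm, ?_⟩
        rw [lact_zr, beta_zero_left h1, add_zero, zero_add]
      refine Submodule.mem_comap.mpr ?_
      show ((0 : A), ract f b) ∈ Wext β
      rw [hz]
      exact Submodule.subset_span ⟨(0, f), (mem_jacSet_ext h1 h2 hone _).mpr (jacSet_isLeftIdeal _).1,
        (b, 0), (mem_jacSet_ext h1 h2 hone _).mpr hb, rfl⟩
  intro n hn
  exact hle hn

-- (S1) : the zero cocycle case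
lemma Wext_zero_eq :
    Wext (fun _ _ => (0 : Module.Dual K A)) = (WAsub K A).prod (NDsub K A) := by
  set z0 : A → A → Module.Dual K A := fun _ _ => 0 with hz0
  have h1 : ∀ a b c : A, z0 (a + b) c = z0 a c + z0 b c := fun _ _ _ => by simp [hz0]
  have h2 : ∀ a b c : A, z0 a (b + c) = z0 a b + z0 a c := fun _ _ _ => by simp [hz0]
  have hone : ∀ b : A, z0 b 1 = 0 := fun _ => rfl
  refine le_antisymm ?_ ?_
  · rw [Wext, Submodule.span_le]
    rintro z ⟨x, hx, y, hy, rfl⟩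
    rw [mem_jacSet_ext h1 h2 hone] at hx hy
    refine Submodule.mem_prod.mpr ⟨?_, ?_⟩
    · exact Submodule.subset_span ⟨x.1, hx, y.1, hy, rfl⟩
    · show lact x.1 y.2 + ract x.2 y.1 + z0 x.1 y.1 ∈ NDsub K A
      rw [hz0, add_zero]
      exact Submodule.add_mem _
        (Submodule.subset_span (Or.inl ⟨x.1, hx, y.2, rfl⟩))
        (Submodule.subset_span (Or.inr ⟨y.1, hy, x.2, rfl⟩))
  · rintro ⟨w, n⟩ hwn
    rw [Submodule.mem_prod] at hwn
    have hsplit : ((w : A), n) = ((w, 0) : A × Module.Dual K A) + (0, n) := by simp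
    rw [hsplit]
    refine Submodule.add_mem _ ?_ (inr_NDsub_le_Wext h1 h2 hone n hwn.2)
    have hWA : WAsub K A ≤
        Submodule.comap (LinearMap.inl K A (Module.Dual K A)) (Wext z0) := by
      rw [WAsub, Submodule.span_le]
      rintro w ⟨x, hx, y, hy, rfl⟩
      refine Submodule.mem_comap.mpr ?_
      show ((x * y : A), (0 : Module.Dual K A)) ∈ Wext z0
      have hz : ((x * y : A), (0 : Module.Dual K A)) = extMul z0 (x, 0) (y, 0) := by
        unfold extMul
        rw [Prod.mk.injEq]
        refine ⟨rfl, ?_⟩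
        rw [lact_zr, ract_zl, hz0]
        simp
      rw [hz]
      exact Submodule.subset_span ⟨(x, 0), (mem_jacSet_ext h1 h2 hone _).mpr hx,
        (y, 0), (mem_jacSet_ext h1 h2 hone _).mpr hy, rfl⟩
    exact hWA hwn.1

end Structure
section DimLemmas

open Module

variable {K V W : Type*} [Field K] [AddCommGroup V] [Module K V] [AddCommGroup W] [Module K W]
variable [FiniteDimensional K V] [FiniteDimensional K W]

lemma finrank_lower (S : Submodule K (V × W)) (P : Submodule K V) (Q : Submodule K W)
    (hP : Submodule.map (LinearMap.fst K V W) S = P)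
    (hQ : ∀ w ∈ Q, ((0 : V), w) ∈ S) :
    finrank K P + finrank K Q ≤ finrank K S := by
  classical
  set π : S →ₗ[K] V := (LinearMap.fst K V W) ∘ₗ S.subtype with hπ
  have hrange : LinearMap.range π = P := by
    rw [hπ, LinearMap.range_comp, Submodule.range_subtype, hP]
  have hker : finrank K Q ≤ finrank K (LinearMap.ker π) := by
    let ι : Q →ₗ[K] (LinearMap.ker π) :=
      { toFun := fun q => ⟨⟨((0 : V), (q : W)), hQ q q.2⟩, by
          simp only [LinearMap.mem_ker, hπ, LinearMap.comp_apply, Submodule.coe_subtype,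
            LinearMap.fst_apply]⟩
        map_add' := fun x y => Subtype.ext (Subtype.ext (by simp))
        map_smul' := fun k x => Subtype.ext (Subtype.ext (by simp)) }
    have hinj : Function.Injective ι := by
      intro x y hxy
      apply Subtype.ext
      have := congrArg (fun z : LinearMap.ker π => ((z : S) : V × W).2) hxy
      simpa [ι] using this
    exact LinearMap.finrank_le_finrank_of_injective hinj
  have := LinearMap.finrank_range_add_finrank_ker π
  rw [hrange] at this
  omega

lemma finrank_upper (S : Submodule K (V × W)) (P : Submodule K V) (Q : Submodule K W)
    (hP : Submodule.map (LinearMap.fst K V W) S ≤ P)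
    (hQ : ∀ z ∈ S, Prod.snd z ∈ Q) :
    finrank K S ≤ finrank K P + finrank K Q := by
  classical
  set π : S →ₗ[K] V := (LinearMap.fst K V W) ∘ₗ S.subtype with hπ
  have hrange : LinearMap.range π ≤ P := by
    rw [hπ, LinearMap.range_comp, Submodule.range_subtype]
    exact hP
  have h1 : finrank K (LinearMap.range π) ≤ finrank K P := Submodule.finrank_mono hrange
  have h2 : finrank K (LinearMap.ker π) ≤ finrank K Q := by
    let ι : (LinearMap.ker π) →ₗ[K] Q :=
      { toFun := fun x => ⟨((x : S) : V × W).2, hQ _ (x : S).2⟩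
        map_add' := fun x y => Subtype.ext (by simp)
        map_smul' := fun k x => Subtype.ext (by simp) }
    have hinj : Function.Injective ι := by
      intro x y hxy
      have hsnd : ((x : S) : V × W).2 = ((y : S) : V × W).2 := by
        simpa [ι] using congrArg Subtype.val hxy
      have hxf : ((x : S) : V × W).1 = 0 := x.2
      have hyf : ((y : S) : V × W).1 = 0 := y.2
      apply Subtype.ext
      apply Subtype.ext
      exact Prod.ext (by rw [hxf, hyf]) hsnd
    exact LinearMap.finrank_le_finrank_of_injective hinj
  have := LinearMap.finrank_range_add_finrank_ker π
  omega

lemma map_fst_prod (P : Submodule K V) (Q : Submodule K W) :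
    Submodule.map (LinearMap.fst K V W) (P.prod Q) = P := by
  ext x
  simp only [Submodule.mem_map, Submodule.mem_prod, LinearMap.fst_apply, Prod.exists,
    exists_and_right, exists_eq_right]
  constructor
  · rintro ⟨y, ⟨hx, hy⟩⟩
    exact hx
  · intro hx
    exact ⟨0, hx, Q.zero_mem⟩

lemma finrank_prod_eq (P : Submodule K V) (Q : Submodule K W) :
    finrank K (P.prod Q) = finrank K P + finrank K Q := by
  refine le_antisymm ?_ ?_
  · exact finrank_upper _ _ _ (le_of_eq (map_fst_prod P Q)) (fun z hz => hz.2)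
  · exact finrank_lower _ _ _ (map_fst_prod P Q) (fun w hw => ⟨P.zero_mem, hw⟩)

end DimLemmas

section NumArrowsEq

open Module

variable {K B : Type*} [Field K] [AddCommGroup B] [Module K B] [FiniteDimensional K B]

lemma numArrows_add_eq (m : B → B → B) (f g : B)
    (hle : cornerJSq K m f g ≤ cornerJ K m f g) :
    numArrows K m f g + finrank K (cornerJSq K m f g) = finrank K (cornerJ K m f g) := by
  have h0 := Submodule.finrank_quotient_add_finrank
      (Submodule.comap (cornerJ K m f g).subtype (cornerJSq K m f g))
  have hmap : Submodule.map (cornerJ K m f g).subtype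
      (Submodule.comap (cornerJ K m f g).subtype (cornerJSq K m f g)) = cornerJSq K m f g := by
    rw [Submodule.map_comap_subtype, inf_eq_right.mpr hle]
  have h1 : finrank K (Submodule.comap (cornerJ K m f g).subtype (cornerJSq K m f g))
      = finrank K (cornerJSq K m f g) := by
    have e := Submodule.equivMapOfInjective ((cornerJ K m f g).subtype)
      (Submodule.injective_subtype _)
      (Submodule.comap (cornerJ K m f g).subtype (cornerJSq K m f g))
    rw [hmap] at e
    exact e.finrank_eq
  rw [← h1]
  exact h0

end NumArrowsEq
section FinalAssembly

open Module

lemma map_prodMap_prod {K V₁ W₁ V₂ W₂ : Type*} [Field K]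
    [AddCommGroup V₁] [Module K V₁] [AddCommGroup W₁] [Module K W₁]
    [AddCommGroup V₂] [Module K V₂] [AddCommGroup W₂] [Module K W₂]
    (f : V₁ →ₗ[K] V₂) (g : W₁ →ₗ[K] W₂) (p : Submodule K V₁) (q : Submodule K W₁) :
    Submodule.map (f.prodMap g) (p.prod q) = (p.map f).prod (q.map g) := by
  ext ⟨x, y⟩
  simp only [Submodule.mem_map, Submodule.mem_prod, LinearMap.prodMap_apply, Prod.ext_iff]
  aesop

variable {K A : Type*} [Field K] [Ring A] [Algebra K A]

lemma map_fst_PhiT (u v : A) (W : Submodule K (A × Module.Dual K A)) :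
    Submodule.map (LinearMap.fst K A (Module.Dual K A)) (Submodule.map (PhiT u v) W)
      = Submodule.map (phiC (K := K) u v)
          (Submodule.map (LinearMap.fst K A (Module.Dual K A)) W) := by
  rw [← Submodule.map_comp, ← Submodule.map_comp]
  congr 1

lemma cornerJ_ext_eq {β : A → A → Module.Dual K A}
    (h1 : ∀ a b c : A, β (a + b) c = β a c + β b c)
    (h2 : ∀ a b c : A, β a (b + c) = β a b + β a c)
    (hone : ∀ b : A, β b 1 = 0)
    {u v : A} (hu : ∀ a : A, β u a = 0) (hv : ∀ a : A, β a v = 0) :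
    cornerJ K (extMul β) ((u, 0) : A × Module.Dual K A) (v, 0)
      = ((JAsub K A).map (phiC (K := K) u v)).prod (LinearMap.range (Lm (K := K) u v)) := by
  rw [cornerJ_eq_map (extMul β) ((u, 0) : A × Module.Dual K A) (v, 0) (PhiT u v)
      (extMul_corner hu hv), span_jacSet_ext h1 h2 hone, PhiT, map_prodMap_prod,
    Submodule.map_top]

lemma cornerJSq_ext_eq {β : A → A → Module.Dual K A}
    {u v : A} (hu : ∀ a : A, β u a = 0) (hv : ∀ a : A, β a v = 0) :
    cornerJSq K (extMul β) ((u, 0) : A × Module.Dual K A) (v, 0)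
      = Submodule.map (PhiT u v) (Wext β) := by
  rw [cornerJSq_eq_map (extMul β) ((u, 0) : A × Module.Dual K A) (v, 0) (PhiT u v)
      (extMul_corner hu hv)]
  rfl

lemma cornerJ_A_eq (u v : A) :
    cornerJ K (fun x y : A => x * y) u v = (JAsub K A).map (phiC (K := K) u v) := by
  rw [cornerJ_eq_map (fun x y : A => x * y) u v (phiC (K := K) u v) (fun x => rfl),
    span_jacSet_A]

lemma cornerJSq_A_eq (u v : A) :
    cornerJSq K (fun x y : A => x * y) u v = (WAsub K A).map (phiC (K := K) u v) := by
  rw [cornerJSq_eq_map (fun x y : A => x * y) u v (phiC (K := K) u v) (fun x => rfl)]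
  rfl

end FinalAssembly

/-- for every pair of vertices, the arrow counts of the ordinary quivers
satisfy `N_A(i,j) ≤ N_{T_α(A)}(i,j) ≤ N_{T_0(A)}(i,j)`; hence, as quivers on the common
vertex set, `Δ ⊆ Δ_{T_α(A)} ⊆ Δ_{T_0(A)}`. -/
theorem ext_quiver_chain [Field K] [Ring A] [Algebra K A] [FiniteDimensional K A]
    {l : ℕ} (e : Fin l → A)
    (hidem : ∀ i, IsPrimitiveIdem (fun x y : A => x * y) (e i))
    (horth : ∀ i j, i ≠ j → e i * e j = 0)
    (hsum : ∑ i, e i = 1)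
    (α : A → A → Module.Dual K A) (h : IsHochschild2Cocycle α)
    (hα : ∀ i (a : A), α (e i) a = 0 ∧ α a (e i) = 0) :
    ∀ i j,
      numArrows K (fun x y : A => x * y) (e i) (e j) ≤
        numArrows K (extMul α) ((e i, 0) : A × Module.Dual K A) (e j, 0) ∧
      numArrows K (extMul α) ((e i, 0) : A × Module.Dual K A) (e j, 0) ≤
        numArrows K (extMul (fun _ _ => (0 : Module.Dual K A)))
          ((e i, 0) : A × Module.Dual K A) (e j, 0) := by
  intro i j
  have h1 := h.1
  have h2 := h.2.1
  have hone : ∀ b : A, α b 1 = 0 := by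
    intro b
    have hsum' : α b 1 = α b (∑ i, e i) := by rw [hsum]
    rw [hsum']
    let F : A →+ Module.Dual K A := AddMonoidHom.mk' (α b) (fun x y => h2 b x y)
    have hF : α b (∑ i, e i) = ∑ i, α b (e i) := map_sum F e Finset.univ
    rw [hF]
    have : ∀ i' : Fin l, α b (e i') = 0 := fun i' => (hα i' b).2
    simp [this]
  have hu : ∀ a : A, α (e i) a = 0 := fun a => (hα i a).1
  have hv : ∀ a : A, α a (e j) = 0 := fun a => (hα j a).2
  -- the zero cocycle
  have z1 : ∀ a b c : A, (fun _ _ => (0 : Module.Dual K A)) (a + b) c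
      = (fun _ _ => (0 : Module.Dual K A)) a c + (fun _ _ => (0 : Module.Dual K A)) b c :=
    fun _ _ _ => by simp
  have z2 : ∀ a b c : A, (fun _ _ => (0 : Module.Dual K A)) a (b + c)
      = (fun _ _ => (0 : Module.Dual K A)) a b + (fun _ _ => (0 : Module.Dual K A)) a c :=
    fun _ _ _ => by simp
  have zone : ∀ b : A, (fun _ _ => (0 : Module.Dual K A)) b (1 : A) = 0 := fun _ => rfl
  have zu : ∀ a : A, (fun _ _ => (0 : Module.Dual K A)) (e i) a = 0 := fun _ => rfl
  have zv : ∀ a : A, (fun _ _ => (0 : Module.Dual K A)) a (e j) = 0 := fun _ => rfl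
  set u := e i with hu'
  set v := e j with hv'
  -- numbers
  set cA := finrank K ((JAsub K A).map (phiC (K := K) u v)) with hcA
  set sA := finrank K ((WAsub K A).map (phiC (K := K) u v)) with hsA
  set r := finrank K (LinearMap.range (Lm (K := K) u v)) with hr
  set nn := finrank K ((NDsub K A).map (Lm (K := K) u v)) with hnn
  set sα := finrank K (Submodule.map (PhiT u v) (Wext α)) with hsα
  set s0 := finrank K (Submodule.map (PhiT u v) (Wext (fun _ _ => (0 : Module.Dual K A)))) with hs0
  -- (f1)
  have f1 : numArrows K (fun x y : A => x * y) u v + sA = cA := by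
    have hle : cornerJSq K (fun x y : A => x * y) u v ≤ cornerJ K (fun x y : A => x * y) u v := by
      rw [cornerJSq_A_eq, cornerJ_A_eq]
      exact Submodule.map_mono WAsub_le_JAsub
    have := numArrows_add_eq (fun x y : A => x * y) u v hle
    rwa [cornerJSq_A_eq, cornerJ_A_eq] at this
  -- (f2)
  have f2 : numArrows K (extMul α) ((u, 0) : A × Module.Dual K A) (v, 0) + sα = cA + r := by
    have hle : cornerJSq K (extMul α) ((u, 0) : A × Module.Dual K A) (v, 0)
        ≤ cornerJ K (extMul α) ((u, 0) : A × Module.Dual K A) (v, 0) := by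
      rw [cornerJSq_ext_eq hu hv, cornerJ_ext_eq h1 h2 hone hu hv]
      calc Submodule.map (PhiT u v) (Wext α)
          ≤ Submodule.map (PhiT u v) ((JAsub K A).prod ⊤) :=
            Submodule.map_mono (Wext_le_prod h1 h2 hone)
        _ = ((JAsub K A).map (phiC (K := K) u v)).prod (LinearMap.range (Lm (K := K) u v)) := by
            rw [PhiT, map_prodMap_prod, Submodule.map_top]
    have := numArrows_add_eq (extMul α) ((u, 0) : A × Module.Dual K A) (v, 0) hle
    rwa [cornerJSq_ext_eq hu hv, cornerJ_ext_eq h1 h2 hone hu hv, finrank_prod_eq] at this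
  -- (f3)
  have f3 : numArrows K (extMul (fun _ _ => (0 : Module.Dual K A)))
      ((u, 0) : A × Module.Dual K A) (v, 0) + s0 = cA + r := by
    have hle : cornerJSq K (extMul (fun _ _ => (0 : Module.Dual K A)))
        ((u, 0) : A × Module.Dual K A) (v, 0)
        ≤ cornerJ K (extMul (fun _ _ => (0 : Module.Dual K A)))
          ((u, 0) : A × Module.Dual K A) (v, 0) := by
      rw [cornerJSq_ext_eq zu zv, cornerJ_ext_eq z1 z2 zone zu zv]
      calc Submodule.map (PhiT u v) (Wext (fun _ _ => (0 : Module.Dual K A)))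
          ≤ Submodule.map (PhiT u v) ((JAsub K A).prod ⊤) :=
            Submodule.map_mono (Wext_le_prod z1 z2 zone)
        _ = ((JAsub K A).map (phiC (K := K) u v)).prod (LinearMap.range (Lm (K := K) u v)) := by
            rw [PhiT, map_prodMap_prod, Submodule.map_top]
    have := numArrows_add_eq (extMul (fun _ _ => (0 : Module.Dual K A)))
      ((u, 0) : A × Module.Dual K A) (v, 0) hle
    rwa [cornerJSq_ext_eq zu zv, cornerJ_ext_eq z1 z2 zone zu zv, finrank_prod_eq] at this
  -- (f3')
  have f3' : s0 = sA + nn := by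
    rw [hs0, Wext_zero_eq, PhiT, map_prodMap_prod, finrank_prod_eq]
  -- (f4)
  have f4 : sA + nn ≤ sα := by
    rw [hsα, hsA, hnn]
    refine finrank_lower _ _ _ ?_ ?_
    · rw [map_fst_PhiT, map_fst_Wext h1 h2 hone]
    · rintro w ⟨n, hn, rfl⟩
      refine ⟨((0 : A), n), inr_NDsub_le_Wext h1 h2 hone n hn, ?_⟩
      rw [PhiT_apply]
      exact Prod.ext (by simp) rfl
  -- (f5)
  have f5 : sα ≤ sA + r := by
    rw [hsα, hsA]
    refine finrank_upper _ _ _ ?_ ?_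
    · rw [map_fst_PhiT, map_fst_Wext h1 h2 hone]
    · rintro z ⟨w, hw, rfl⟩
      exact ⟨w.2, rfl⟩
  exact ⟨by omega, by omega⟩
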